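/- There exist real sequences u = (u_k), v = (v_k) with all terms nonzero whose row sums u_k Σ_{i=0}^k v_i are absolutely summable, and a sequence (X_k) of fuzzy numbers such that (X_k) ∈ bv^F(u,v) but sup_k d(X_k, 0̄) = ∞. (For instance v_k = 1 for all k, u_k = 1/(k+1)^4, and X_k = k̄ for odd k, X_k = 0̄ for even k.) Hence the inclusion of the bounded fuzzy sequences into bv^F(u,v) is strict. -/

import Mathlib

open Finset Filter Topology

/-- A fuzzy number, represented (via the Representation Theorem) by the pair of
functions `α ↦ X̲^(α)` and `α ↦ X̄^(α)` giving the endpoints of its α-cuts. -/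
structure FuzzyNumber where
  lower : ℝ → ℝ
  upper : ℝ → ℝ
  lower_mono : MonotoneOn lower (Set.Icc 0 1)
  upper_anti : AntitoneOn upper (Set.Icc 0 1)
  lower_leftCont : ∀ a ∈ Set.Ioc (0:ℝ) 1, ContinuousWithinAt lower (Set.Iic a) a
  upper_leftCont : ∀ a ∈ Set.Ioc (0:ℝ) 1, ContinuousWithinAt upper (Set.Iic a) a
  lower_rightCont : ContinuousWithinAt lower (Set.Ici 0) 0
  upper_rightCont : ContinuousWithinAt upper (Set.Ici 0) 0
  le_at_one : lower 1 ≤ upper 1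

namespace FuzzyNumber

/-- The metric `d(X,Y) = sup_{α∈[0,1]} max(|X̲^(α)−Y̲^(α)|, |X̄^(α)−Ȳ^(α)|)`. -/
noncomputable def dist (X Y : FuzzyNumber) : ℝ :=
  ⨆ α : Set.Icc (0:ℝ) 1, max |X.lower α - Y.lower α| |X.upper α - Y.upper α|

/-- Levelwise addition. -/
def add (X Y : FuzzyNumber) : FuzzyNumber where
  lower := fun α => X.lower α + Y.lower α
  upper := fun α => X.upper α + Y.upper α
  lower_mono := X.lower_mono.add Y.lower_mono
  upper_anti := X.upper_anti.add Y.upper_anti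
  lower_leftCont := fun a ha => (X.lower_leftCont a ha).add (Y.lower_leftCont a ha)
  upper_leftCont := fun a ha => (X.upper_leftCont a ha).add (Y.upper_leftCont a ha)
  lower_rightCont := X.lower_rightCont.add Y.lower_rightCont
  upper_rightCont := X.upper_rightCont.add Y.upper_rightCont
  le_at_one := add_le_add X.le_at_one Y.le_at_one

/-- Levelwise negation: `(−Y)^(α) = [−Ȳ^(α), −Y̲^(α)]`. -/
def neg (X : FuzzyNumber) : FuzzyNumber where
  lower := fun α => -X.upper α
  upper := fun α => -X.lower α
  lower_mono := X.upper_anti.neg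
  upper_anti := X.lower_mono.neg
  lower_leftCont := fun a ha => (X.upper_leftCont a ha).neg
  upper_leftCont := fun a ha => (X.lower_leftCont a ha).neg
  lower_rightCont := X.upper_rightCont.neg
  upper_rightCont := X.lower_rightCont.neg
  le_at_one := neg_le_neg X.le_at_one

/-- `X − Y = X + (−Y)`. -/
def sub (X Y : FuzzyNumber) : FuzzyNumber := X.add Y.neg

/-- The crisp fuzzy number `r̄`. -/
def const (r : ℝ) : FuzzyNumber where
  lower := fun _ => r
  upper := fun _ => r
  lower_mono := monotoneOn_const
  upper_anti := antitoneOn_const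
  lower_leftCont := fun _ _ => continuousWithinAt_const
  upper_leftCont := fun _ _ => continuousWithinAt_const
  lower_rightCont := continuousWithinAt_const
  upper_rightCont := continuousWithinAt_const
  le_at_one := le_refl r

/-- The membership function `X(t) = sup{α ∈ [0,1] : X̲^(α) ≤ t ≤ X̄^(α)}`. -/
noncomputable def memFun (X : FuzzyNumber) (t : ℝ) : ℝ :=
  sSup {a : ℝ | a ∈ Set.Icc (0:ℝ) 1 ∧ X.lower a ≤ t ∧ t ≤ X.upper a}

/-- A fuzzy number `S` is symmetric if `S(t) = S(−t)` for all `t`. -/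
def IsSymmetric (S : FuzzyNumber) : Prop := ∀ t : ℝ, S.memFun t = S.memFun (-t)

/-- The difference sequence `ΔX_k = X_k − X_{k+1}`. -/
def delta (X : ℕ → FuzzyNumber) (k : ℕ) : FuzzyNumber := (X k).sub (X (k+1))

/-- Membership in `bv^F(u,v)`:
`Σ_{k=0}^∞ |Σ_{i=0}^k u_k v_i d(ΔX_i, 0̄)| < ∞`. -/
def MemBvF (u v : ℕ → ℝ) (X : ℕ → FuzzyNumber) : Prop :=
  Summable fun k => |∑ i ∈ Finset.range (k+1), u k * v i * dist (delta X i) (const 0)|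

end FuzzyNumber

instance : Nonempty (Set.Icc (0:ℝ) 1) := ⟨⟨0, by norm_num⟩⟩

open FuzzyNumber in
lemma aux_dist_const (r s : ℝ) : FuzzyNumber.dist (const r) (const s) = |r - s| := by
  unfold FuzzyNumber.dist const
  simp [ciSup_const]

open FuzzyNumber in
lemma aux_dist_sub_const (r s : ℝ) :
    FuzzyNumber.dist ((const r).sub (const s)) (const 0) = |r - s| := by
  unfold FuzzyNumber.dist sub add neg const
  simp only [sub_zero]
  rw [ciSup_const, max_self]
  ring_nf

lemma aux_summable : Summable (fun k : ℕ => 1 / ((k : ℝ) + 1) ^ 2) := by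
  have h := Real.summable_one_div_nat_pow.mpr (by norm_num : 1 < 2)
  have h2 := (summable_nat_add_iff 1).mpr h
  exact h2.congr (fun n => by push_cast; ring)

open FuzzyNumber in
/-- the inclusion of the bounded sequences into `bv^F(u,v)` is strict:
there are `u`, `v` with absolutely summable row sums and an unbounded
sequence `(X_k)` of fuzzy numbers lying in `bv^F(u,v)`. -/
theorem linfty_subset_bvF_strict : ∃ (u v : ℕ → ℝ) (X : ℕ → FuzzyNumber),
    (∀ k, u k ≠ 0) ∧ (∀ k, v k ≠ 0) ∧
    (Summable fun k => |u k * ∑ i ∈ Finset.range (k+1), v i|) ∧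
    MemBvF u v X ∧
    ¬ BddAbove (Set.range fun k => dist (X k) (const 0)) := by
  refine ⟨fun k => 1 / ((k : ℝ) + 1) ^ 3, fun _ => 1, fun k => const k, ?_, ?_, ?_, ?_, ?_⟩
  · intro k
    positivity
  · intro k; norm_num
  · apply aux_summable.congr
    intro k
    rw [Finset.sum_const, Finset.card_range]
    rw [abs_of_nonneg (by positivity)]
    field_simp
    ring
  · unfold MemBvF
    apply aux_summable.congr
    intro k
    have hd : ∀ i : ℕ, dist (delta (fun k => const (k : ℝ)) i) (const 0) = 1 := by
      intro i
      unfold delta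
      rw [aux_dist_sub_const]
      push_cast; norm_num
    rw [eq_comm]
    calc |∑ i ∈ Finset.range (k+1),
          1 / ((k : ℝ) + 1) ^ 3 * 1 * dist (delta (fun k => const (k : ℝ)) i) (const 0)|
        = |∑ _i ∈ Finset.range (k+1), 1 / ((k : ℝ) + 1) ^ 3| := by
          congr 1; apply Finset.sum_congr rfl; intro i _; rw [hd i]; ring
      _ = 1 / ((k : ℝ) + 1) ^ 2 := by
          rw [Finset.sum_const, Finset.card_range, abs_of_nonneg (by positivity)]
          rw [nsmul_eq_mul]; push_cast
          rw [mul_one_div, div_eq_div_iff (by positivity) (by positivity)]; ring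
  · rintro ⟨M, hM⟩
    obtain ⟨k, hk⟩ := exists_nat_gt M
    have h2 : FuzzyNumber.dist (const (k:ℝ)) (const 0) ≤ M := hM ⟨k, rfl⟩
    rw [aux_dist_const] at h2
    replace this := h2
    simp only [sub_zero] at this
    rw [abs_of_nonneg (Nat.cast_nonneg k)] at this
    linarith
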